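/- Let X be a bounded real-valued random variable with a ≤ X ≤ b almost surely, mean μ and variance σ². Then σ² ≤ (b − μ)(μ − a). -/

import Mathlib

open MeasureTheory ProbabilityTheory

/-- Bhatia–Davis inequality. -/
theorem bhatia_davis {Ω : Type*} [MeasurableSpace Ω] (P : Measure Ω)
    [IsProbabilityMeasure P] (X : Ω → ℝ) (hX : AEMeasurable X P)
    (a b μ σ : ℝ) (hab : ∀ᵐ ω ∂P, a ≤ X ω ∧ X ω ≤ b)
    (hμ : μ = ∫ ω, X ω ∂P) (hσ : σ ^ 2 = variance X P) :
    σ ^ 2 ≤ (b - μ) * (μ - a) := by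
  have hsm : AEStronglyMeasurable X P := hX.aestronglyMeasurable
  have hbd : ∀ᵐ ω ∂P, X ω ∈ Set.Icc a b := hab.mono fun ω h => ⟨h.1, h.2⟩
  have hmem : MemLp X 2 P := memLp_of_bounded hbd hsm 2
  have hmem1 : Integrable X P := hmem.integrable (by norm_num)
  have hmem2 : Integrable (fun ω => X ω ^ 2) P := by
    simpa using hmem.integrable_sq
  have hvar : variance X P = ∫ ω, X ω ^ 2 ∂P - (∫ ω, X ω ∂P) ^ 2 :=
    variance_eq_sub hmem
  -- key: ∫ (b - X)(X - a) ≥ 0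
  have hnn : 0 ≤ ∫ ω, (b - X ω) * (X ω - a) ∂P := by
    apply integral_nonneg_of_ae
    filter_upwards [hab] with ω h
    exact mul_nonneg (by linarith [h.2]) (by linarith [h.1])
  have hexp : ∫ ω, (b - X ω) * (X ω - a) ∂P
      = (a + b) * (∫ ω, X ω ∂P) - (∫ ω, X ω ^ 2 ∂P) - a * b := by
    have : (fun ω => (b - X ω) * (X ω - a))
        = fun ω => (a + b) * X ω - X ω ^ 2 - a * b := by
      funext ω; ring
    rw [this]
    have e1 : ∫ ω, ((a + b) * X ω - X ω ^ 2 - a * b) ∂P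
        = (∫ ω, ((a + b) * X ω - X ω ^ 2) ∂P) - ∫ _ω, (a * b) ∂P :=
      integral_sub ((hmem1.const_mul (a + b)).sub hmem2) (integrable_const _)
    have e2 : ∫ ω, ((a + b) * X ω - X ω ^ 2) ∂P
        = (∫ ω, (a + b) * X ω ∂P) - ∫ ω, X ω ^ 2 ∂P :=
      integral_sub (hmem1.const_mul (a + b)) hmem2
    rw [e1, e2, integral_const_mul, integral_const]
    simp
  rw [← hμ] at hexp
  rw [hσ, hvar, ← hμ]
  nlinarith [hnn, hexp]
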